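/- Let h : ℝ³ → ℝ be defined by h(x¹,x²,x³) = ½((x¹)² + (x²)² - 2(x³)²). There exist no continuous vector fields a, b : ℝ³ → ℝ³ such that a(x) × b(x) = ∇h(x) for all x ∈ ℝ³. -/

import Mathlib

open Real Complex Set Finset

lemma no_degree_two (F : ℝ × ℝ → ℂ) (hF : Continuous F) (h0 : ∀ p, F p ≠ 0)
    (hper : ∀ t, F (2 * π, t) = F (0, t))
    (htop : ∀ θ : ℝ, F (θ, 0) = F (0, 0))
    (hbot : ∀ θ : ℝ, F (θ, π) = F (0, π) * Complex.exp (-(2 * θ) * Complex.I)) : False := by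
  classical
  set K : Set (ℝ × ℝ) := Icc 0 (2 * π) ×ˢ Icc 0 π with hK
  have hKc : IsCompact K := isCompact_Icc.prod isCompact_Icc
  obtain ⟨p₀, hp₀K, hp₀⟩ : ∃ p₀ ∈ K, ∀ p ∈ K, ‖F p₀‖ ≤ ‖F p‖ := by
    obtain ⟨p₀, hp₀K, h⟩ := hKc.exists_isMinOn
      ⟨(0, 0), by constructor <;> constructor <;> positivity⟩
      (continuous_norm.comp hF).continuousOn
    exact ⟨p₀, hp₀K, fun p hp => h hp⟩
  set ε : ℝ := ‖F p₀‖ with hε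
  have hεpos : 0 < ε := by
    simpa [hε] using norm_pos_iff.mpr (h0 p₀)
  obtain ⟨δ, hδpos, hδ⟩ : ∃ δ > 0, ∀ p ∈ K, ∀ q ∈ K, dist p q < δ →
      dist (F p) (F q) < ε := by
    have := hKc.uniformContinuousOn_of_continuous hF.continuousOn
    rw [Metric.uniformContinuousOn_iff] at this
    obtain ⟨δ, hδ, h⟩ := this ε hεpos
    exact ⟨δ, hδ, fun p hp q hq hd => h p hp q hq hd⟩
  -- choose n
  obtain ⟨n₀, hn₀⟩ := exists_nat_gt (2 * π / δ)
  set n : ℕ := n₀ + 5 with hn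
  have hn5 : (5 : ℕ) ≤ n := by omega
  have hnpos : (0 : ℝ) < n := by positivity
  have hstep : 2 * π / n < δ := by
    rw [div_lt_iff₀ hnpos]
    have h1 : 2 * π / δ < (n : ℝ) := lt_of_lt_of_le hn₀ (by exact_mod_cast Nat.le_add_right n₀ 5)
    calc 2 * π = (2 * π / δ) * δ := by field_simp
    _ < n * δ := mul_lt_mul_of_pos_right h1 hδpos
    _ = δ * n := mul_comm _ _
  -- sample points
  set θf : ℕ → ℝ := fun j => 2 * π * j / n with hθf
  have hθmem : ∀ j ≤ n, θf j ∈ Icc (0 : ℝ) (2 * π) := by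
    intro j hj
    constructor
    · positivity
    · rw [hθf]
      rw [div_le_iff₀ hnpos]
      have : (j : ℝ) ≤ n := by exact_mod_cast hj
      nlinarith [pi_pos]
  set g : ℕ → ℝ → ℂ := fun j t => F (θf j, t) with hg
  have hg0 : ∀ j t, g j t ≠ 0 := fun j t => h0 _
  set w : ℝ → ℝ := fun t => ∑ j ∈ Finset.range n, Complex.arg (g (j + 1) t / g j t) with hw
  -- ratio near 1
  have hratio : ∀ j < n, ∀ t ∈ Icc (0 : ℝ) π,
      ‖g (j + 1) t / g j t - 1‖ < 1 := by
    intro j hj t ht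
    have hj1 : (θf (j+1), t) ∈ K := ⟨hθmem (j+1) hj, ht⟩
    have hj0 : (θf j, t) ∈ K := ⟨hθmem j hj.le, ht⟩
    have hdist : dist (θf (j+1), t) (θf j, t) < δ := by
      rw [Prod.dist_eq]
      simp only [dist_self]
      rw [max_eq_left dist_nonneg]
      rw [Real.dist_eq]
      have : θf (j+1) - θf j = 2 * π / n := by
        rw [hθf]; push_cast; field_simp; ring
      rw [show |θf (j+1) - θf j| = 2 * π / n by rw [this]; exact abs_of_pos (by positivity)]
      exact hstep
    have hnum : ‖g (j+1) t - g j t‖ < ε := by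
      have := hδ _ hj1 _ hj0 hdist
      rwa [Complex.dist_eq] at this
    have hden : ε ≤ ‖g j t‖ := hp₀ _ hj0
    have : g (j + 1) t / g j t - 1 = (g (j+1) t - g j t) / g j t :=
      div_sub_one (hg0 j t) ▸ rfl
    rw [this, norm_div]
    rw [div_lt_one (by exact norm_pos_iff.mpr (hg0 j t))]
    exact lt_of_lt_of_le hnum hden
  -- ratios in slit plane
  have hslit : ∀ j < n, ∀ t ∈ Icc (0 : ℝ) π, g (j + 1) t / g j t ∈ Complex.slitPlane := by
    intro j hj t ht
    have h1 := hratio j hj t ht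
    rw [Complex.mem_slitPlane_iff]
    left
    have h3 : |(g (j + 1) t / g j t - 1).re| ≤ ‖g (j + 1) t / g j t - 1‖ :=
      Complex.abs_re_le_norm _
    rw [abs_le] at h3
    have h4 : (g (j + 1) t / g j t - 1).re = (g (j + 1) t / g j t).re - 1 := by simp
    linarith [h3.1]
  -- continuity of w
  have hwcont : ContinuousOn w (Icc 0 π) := by
    apply continuousOn_finset_sum
    intro j hj
    rw [Finset.mem_range] at hj
    intro t ht
    have hcg : ∀ k, Continuous fun t => g k t := fun k =>
      hF.comp (continuous_const.prodMk continuous_id')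
    have hcr : ContinuousAt (fun t => g (j+1) t / g j t) t :=
      ((hcg (j+1)).continuousAt).div ((hcg j).continuousAt) (hg0 j t)
    have : ContinuousAt (fun t => Complex.arg (g (j+1) t / g j t)) t :=
      ContinuousAt.comp (x := t) (f := fun t => g (j+1) t / g j t)
        (Complex.continuousAt_arg (hslit j hj t ht)) hcr
    exact this.continuousWithinAt
  -- step between sample points
  have hstep2 : ∀ j : ℕ, θf (j + 1) = θf j + 2 * π / n := by
    intro j
    rw [hθf]
    push_cast
    field_simp
  have hθ0 : θf 0 = 0 := by simp [hθf]
  have hθn : θf n = 2 * π := by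
    rw [hθf]
    field_simp
  -- w takes values in 2πℤ
  have hint : ∀ t, ∃ k : ℤ, w t = k * (2 * π) := by
    intro t
    have htel : ∀ m : ℕ, ∏ j ∈ Finset.range m, (g (j + 1) t / g j t) = g m t / g 0 t := by
      intro m
      induction m with
      | zero => simp [div_self (hg0 0 t)]
      | succ m ih =>
        rw [Finset.prod_range_succ, ih, div_mul_div_comm]
        rw [div_eq_div_iff (mul_ne_zero (hg0 0 t) (hg0 m t)) (hg0 0 t)]
        ring
    have hprod1 : ∏ j ∈ Finset.range n, (g (j + 1) t / g j t) = 1 := by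
      rw [htel n]
      have : g n t = g 0 t := by
        show F (θf n, t) = F (θf 0, t)
        rw [hθn, hθ0]
        exact hper t
      rw [this, div_self (hg0 0 t)]
    have habs1 : ∏ j ∈ Finset.range n, ‖g (j + 1) t / g j t‖ = 1 := by
      rw [← norm_prod, hprod1, norm_one]
    have hexp : Complex.exp ((w t : ℂ) * Complex.I) = 1 := by
      have : ((w t : ℝ) : ℂ) = ∑ j ∈ Finset.range n,
          ((Complex.arg (g (j + 1) t / g j t) : ℝ) : ℂ) := by
        rw [hw]; push_cast; rfl
      rw [this, Finset.sum_mul, Complex.exp_sum]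
      have heach : ∀ j ∈ Finset.range n, Complex.exp
          ((Complex.arg (g (j + 1) t / g j t) : ℂ) * Complex.I)
          = (g (j + 1) t / g j t) / ((‖g (j + 1) t / g j t‖ : ℝ) : ℂ) := by
        intro j _
        have hne : ((‖g (j + 1) t / g j t‖ : ℝ) : ℂ) ≠ 0 := by
          simp only [ne_eq, Complex.ofReal_eq_zero, norm_eq_zero]
          exact div_ne_zero (hg0 _ t) (hg0 j t)
        rw [eq_div_iff hne, mul_comm]
        exact Complex.norm_mul_exp_arg_mul_I _
      rw [Finset.prod_congr rfl heach, Finset.prod_div_distrib, hprod1]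
      rw [← Complex.ofReal_prod, habs1]
      norm_num
    obtain ⟨k, hk⟩ := Complex.exp_eq_one_iff.mp hexp
    refine ⟨k, ?_⟩
    rw [show (k : ℂ) * (2 * ↑π * Complex.I) = ((k : ℂ) * (2 * ↑π)) * Complex.I by ring] at hk
    have := mul_right_cancel₀ Complex.I_ne_zero hk
    exact_mod_cast this
  -- value at 0
  have hw0 : w 0 = 0 := by
    rw [hw]
    apply Finset.sum_eq_zero
    intro j _
    have h1 : g (j + 1) 0 = F (0, 0) := htop _
    have h2 : g j 0 = F (0, 0) := htop _
    rw [h1, h2, div_self (h0 (0, 0)), Complex.arg_one]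
  -- value at π
  have hwπ : w π = -(4 * π) := by
    have hval : ∀ j : ℕ, Complex.arg (g (j + 1) π / g j π) = -(4 * π / n) := by
      intro j
      have h1 : g (j + 1) π = F (0, π) * Complex.exp (-(2 * θf (j + 1)) * Complex.I) := hbot _
      have h2 : g j π = F (0, π) * Complex.exp (-(2 * θf j) * Complex.I) := hbot _
      have hr : g (j + 1) π / g j π = Complex.exp ((-(4 * π / n) : ℝ) * Complex.I) := by
        rw [h1, h2, mul_div_mul_left _ _ (h0 (0, π)), ← Complex.exp_sub]
        congr 1
        rw [hstep2 j]
        push_cast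
        ring
      rw [hr]
      have hmem : (-(4 * π / n) : ℝ) ∈ Set.Ioc (-π) π := by
        constructor
        · have h5 : (5 : ℝ) ≤ n := by exact_mod_cast hn5
          rw [neg_lt_neg_iff, div_lt_iff₀ hnpos]
          nlinarith [pi_pos]
        · have : (0:ℝ) < 4 * π / n := by positivity
          linarith [pi_pos]
      rw [Complex.exp_mul_I]
      exact Complex.arg_cos_add_sin_mul_I hmem
    show ∑ j ∈ Finset.range n, (g (j + 1) π / g j π).arg = -(4 * π)
    rw [Finset.sum_congr rfl (fun j _ => hval j), Finset.sum_const, Finset.card_range,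
      nsmul_eq_mul]
    field_simp
  -- intermediate value theorem
  have hmem : -π ∈ Icc (w π) (w 0) := by
    rw [hw0, hwπ]
    constructor <;> linarith [pi_pos]
  obtain ⟨t, ht, hwt⟩ := intermediate_value_Icc' pi_pos.le hwcont hmem
  obtain ⟨k, hk⟩ := hint t
  rw [hwt] at hk
  have hcast : ((2 * k + 1 : ℤ) : ℝ) = 0 := by
    push_cast
    nlinarith [pi_pos]
  have : (2 * k + 1 : ℤ) = 0 := by exact_mod_cast hcast
  omega


open Matrix

theorem stmt7 :
    ¬ ∃ a b : (Fin 3 → ℝ) → (Fin 3 → ℝ), Continuous a ∧ Continuous b ∧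
      ∀ x : Fin 3 → ℝ, crossProduct (a x) (b x) = ![x 0, x 1, -2 * x 2] := by
  rintro ⟨a, b, ha, hb, hab⟩
  -- tangency
  have htan : ∀ x : Fin 3 → ℝ,
      a x 0 * x 0 + a x 1 * x 1 + a x 2 * (-2 * x 2) = 0 := by
    intro x
    have := dot_self_cross (a x) (b x)
    rw [hab x] at this
    simpa [dotProduct, Fin.sum_univ_three, Matrix.vecHead, Matrix.vecTail] using this
  set X : ℝ × ℝ → (Fin 3 → ℝ) := fun p =>
    ![Real.sin p.2 * Real.cos p.1, Real.sin p.2 * Real.sin p.1, Real.cos p.2] with hX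
  have hXcont : Continuous X := by
    apply continuous_pi
    intro i
    fin_cases i <;> simp [hX] <;> fun_prop
  set A : ℝ × ℝ → (Fin 3 → ℝ) := fun p => a (X p) with hA
  have hAcont : Continuous A := ha.comp hXcont
  set F : ℝ × ℝ → ℂ := fun p =>
    ((-(A p 0) * Real.sin p.1 + (A p 1) * Real.cos p.1 : ℝ)
      + ((A p 0) * Real.cos p.2 * Real.cos p.1 + (A p 1) * Real.cos p.2 * Real.sin p.1
          + 2 * (A p 2) * Real.sin p.2 : ℝ) * Complex.I)
      * Complex.exp (-(p.1 : ℂ) * Complex.I) with hF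
  -- helper : exp(-θ i) as cos/sin
  have hexp : ∀ θ : ℝ, Complex.exp (-(θ:ℂ) * Complex.I)
      = (Real.cos θ : ℂ) - (Real.sin θ : ℂ) * Complex.I := by
    intro θ
    rw [show -(θ:ℂ) * Complex.I = ((-θ : ℝ) : ℂ) * Complex.I by push_cast; ring,
      Complex.exp_mul_I, ← Complex.ofReal_cos, ← Complex.ofReal_sin,
      Real.cos_neg, Real.sin_neg]
    push_cast
    ring
  -- continuity
  have hA0 : Continuous fun p => A p 0 := (continuous_apply 0).comp hAcont
  have hA1 : Continuous fun p => A p 1 := (continuous_apply 1).comp hAcont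
  have hA2 : Continuous fun p => A p 2 := (continuous_apply 2).comp hAcont
  have hFc : Continuous F := by
    rw [hF]
    apply Continuous.mul
    · fun_prop
    · apply Complex.continuous_exp.comp
      fun_prop
  -- nonvanishing
  have hF0 : ∀ p, F p ≠ 0 := by
    intro p hzero
    rw [hF] at hzero
    simp only [mul_eq_zero, Complex.exp_ne_zero, or_false] at hzero
    have hre : -(A p 0) * Real.sin p.1 + (A p 1) * Real.cos p.1 = 0 := by
      have := congrArg Complex.re hzero
      simpa [Complex.sin_ofReal_re, Complex.cos_ofReal_re] using this
    have him : (A p 0) * Real.cos p.2 * Real.cos p.1 + (A p 1) * Real.cos p.2 * Real.sin p.1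
        + 2 * (A p 2) * Real.sin p.2 = 0 := by
      have := congrArg Complex.im hzero
      simpa [Complex.sin_ofReal_re, Complex.cos_ofReal_re] using this
    have hr : A p 0 * (Real.sin p.2 * Real.cos p.1) + A p 1 * (Real.sin p.2 * Real.sin p.1)
        + A p 2 * (-2 * Real.cos p.2) = 0 := by
      have := htan (X p)
      simpa [hX] using this
    have h1 := Real.sin_sq_add_cos_sq p.1
    have h2 := Real.sin_sq_add_cos_sq p.2
    -- solve the linear system
    have e0 : A p 0 = 0 := by
      linear_combination (-(Real.sin p.1)) * hre + (Real.cos p.2 * Real.cos p.1) * him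
        + (Real.sin p.2 * Real.cos p.1) * hr
        + (-(A p 0)) * h1 + (-(A p 0 * Real.cos p.1 ^ 2 + A p 1 * Real.cos p.1 * Real.sin p.1)) * h2
    have e1 : A p 1 = 0 := by
      linear_combination (Real.cos p.1) * hre + (Real.cos p.2 * Real.sin p.1) * him
        + (Real.sin p.2 * Real.sin p.1) * hr
        + (-(A p 1)) * h1 + (-(A p 1 * Real.sin p.1 ^ 2 + A p 0 * Real.cos p.1 * Real.sin p.1)) * h2
    have e2 : A p 2 = 0 := by
      linear_combination (Real.sin p.2 / 2) * him + (-(Real.cos p.2) / 2) * hr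
        + (-(A p 2)) * h2
    have hAzero : a (X p) = 0 := by
      funext i
      fin_cases i
      · exact e0
      · exact e1
      · exact e2
    have h3 := hab (X p)
    rw [hAzero] at h3
    rw [cross_apply] at h3
    have hc0 := congrFun h3 0
    have hc1 := congrFun h3 1
    have hc2 := congrFun h3 2
    simp [hX] at hc0 hc1 hc2
    rcases hc0 with h | h
    · nlinarith [h2]
    · rcases hc1 with h' | h'
      · nlinarith [h2]
      · nlinarith [h1]
  -- periodicity
  have hXper : ∀ t, X (2 * π, t) = X (0, t) := by
    intro t
    funext i
    fin_cases i <;> simp [hX]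
  have hper : ∀ t, F (2 * π, t) = F (0, t) := by
    intro t
    rw [hF]
    simp only
    rw [show A (2 * π, t) = A (0, t) by rw [hA]; simp only; rw [hXper t]]
    simp only [hexp]
    norm_num [Real.sin_two_pi, Real.cos_two_pi]
  -- top circle : φ = 0
  have hXtop : ∀ θ : ℝ, X (θ, 0) = ![0, 0, 1] := by
    intro θ
    funext i
    fin_cases i <;> simp [hX]
  have hc₃ : a ![0, 0, 1] 2 = 0 := by
    have := htan ![0, 0, 1]
    simp at this
    linarith
  have htopval : ∀ θ : ℝ, F (θ, 0)
      = (a ![0, 0, 1] 1 : ℂ) + (a ![0, 0, 1] 0 : ℂ) * Complex.I := by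
    intro θ
    rw [hF]
    simp only
    rw [show A (θ, 0) = a ![0, 0, 1] by rw [hA]; simp only; rw [hXtop θ]]
    rw [hexp]
    simp only [Real.cos_zero, Real.sin_zero, hc₃]
    push_cast
    linear_combination (-((a ![0, 0, 1] 0 : ℂ) * Complex.sin (θ:ℂ) * Complex.cos (θ:ℂ))
        - (a ![0, 0, 1] 1 : ℂ) * Complex.sin (θ:ℂ) ^ 2) * Complex.I_sq
      + ((a ![0, 0, 1] 0 : ℂ) * Complex.I + (a ![0, 0, 1] 1 : ℂ))
        * Complex.sin_sq_add_cos_sq (θ:ℂ)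
  have htop : ∀ θ : ℝ, F (θ, 0) = F (0, 0) := fun θ => (htopval θ).trans (htopval 0).symm
  -- bottom circle : φ = π
  have hXbot : ∀ θ : ℝ, X (θ, π) = ![0, 0, -1] := by
    intro θ
    funext i
    fin_cases i <;> simp [hX]
  have hd₃ : a ![0, 0, -1] 2 = 0 := by
    have := htan ![0, 0, -1]
    simp at this
    linarith
  have hbotval : ∀ θ : ℝ, F (θ, π)
      = ((a ![0, 0, -1] 1 : ℂ) - (a ![0, 0, -1] 0 : ℂ) * Complex.I)
        * Complex.exp (-(2 * (θ:ℂ)) * Complex.I) := by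
    intro θ
    rw [hF]
    simp only
    rw [show A (θ, π) = a ![0, 0, -1] by rw [hA]; simp only; rw [hXbot θ]]
    have hfirst : ((-(a ![0, 0, -1] 0) * Real.sin θ + (a ![0, 0, -1] 1) * Real.cos θ : ℝ) : ℂ)
        + ((a ![0, 0, -1] 0 * Real.cos π * Real.cos θ + a ![0, 0, -1] 1 * Real.cos π * Real.sin θ
            + 2 * (a ![0, 0, -1] 2) * Real.sin π : ℝ) : ℂ) * Complex.I
        = ((a ![0, 0, -1] 1 : ℂ) - (a ![0, 0, -1] 0 : ℂ) * Complex.I)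
          * Complex.exp (-(θ:ℂ) * Complex.I) := by
      rw [hexp]
      simp only [Real.cos_pi, Real.sin_pi, hd₃]
      push_cast
      linear_combination (-((a ![0, 0, -1] 0 : ℂ) * Complex.sin (θ:ℂ))) * Complex.I_sq
    rw [hfirst, mul_assoc, ← Complex.exp_add]
    ring_nf
  have hbot : ∀ θ : ℝ, F (θ, π) = F (0, π) * Complex.exp (-(2 * (θ:ℂ)) * Complex.I) := by
    intro θ
    rw [hbotval θ, hbotval 0]
    norm_num
  exact no_degree_two F hFc hF0 hper htop hbot
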